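/- Let q : [s₀,∞) → ℝ be convex. Then ∫_{s₀}^∞ q(s) e^{−s/2} ds = ∞ if and only if Σ_{k ≥ 1} exp(−q*(k/2)/k) = ∞, where q*(y) = sup_{s ≥ s₀} (ys − q(s)). -/

import Mathlib

open MeasureTheory Real Set Filter
open scoped ENNReal NNReal

lemma exp_half_tendsto (c : ℝ) :
    Tendsto (fun s : ℝ => -((s + 2 - 2*c) * Real.exp (-s / 2))) atTop (nhds 0) := by
  have h2 : Tendsto (fun s : ℝ => s / 2) atTop atTop :=
    Tendsto.atTop_div_const (by norm_num) tendsto_id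
  have h1 : Tendsto (fun u : ℝ => (2*u + (2 - 2*c)) * Real.exp (-u)) atTop (nhds 0) := by
    have ha := (tendsto_pow_mul_exp_neg_atTop_nhds_zero 1).const_mul 2
    have hb := (tendsto_exp_neg_atTop_nhds_zero).const_mul (2 - 2*c)
    have := ha.add hb
    simp only [pow_one, mul_zero, add_zero] at this
    convert this using 2 with u
    ring
  have h3 := h1.comp h2
  have h4 : (fun s : ℝ => ((2*(s/2) + (2 - 2*c)) * Real.exp (-(s/2)))) = fun s : ℝ => ((s + 2 - 2*c) * Real.exp (-s / 2)) := by
    funext s; rw [neg_div]; ring_nf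
  rw [show (0:ℝ) = -0 by ring]
  apply Tendsto.neg
  rw [← h4]
  exact h3

lemma hasDeriv_H2 (c : ℝ) (s : ℝ) :
    HasDerivAt (fun s : ℝ => -((s + 2 - 2*c) * Real.exp (-s / 2)))
      ((s/2 - c) * Real.exp (-s / 2)) s := by
  have h1 : HasDerivAt (fun s : ℝ => Real.exp (-s / 2)) (Real.exp (-s/2) * (-1/2)) s := by
    have := (hasDerivAt_id s).neg.div_const 2
    exact (Real.hasDerivAt_exp (-s/2)).comp s (by simpa using this)
  have h2 : HasDerivAt (fun s : ℝ => s + 2 - 2*c) 1 s := by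
    simpa using ((hasDerivAt_id s).add_const 2).sub_const (2*c)
  have := (h2.mul h1).neg
  exact this.congr_deriv (by ring)

lemma lint_H2 (a c : ℝ) (h : 2*c ≤ a) :
    ∫⁻ s in Set.Ioi a, ENNReal.ofReal ((s/2 - c) * Real.exp (-s / 2))
      = ENNReal.ofReal ((a + 2 - 2*c) * Real.exp (-a / 2)) := by
  have hderiv : ∀ x ∈ Set.Ici a, HasDerivAt (fun s : ℝ => -((s + 2 - 2*c) * Real.exp (-s / 2)))
      ((x/2 - c) * Real.exp (-x / 2)) x := fun x _ => hasDeriv_H2 c x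
  have hpos : ∀ x ∈ Set.Ioi a, 0 ≤ (x/2 - c) * Real.exp (-x / 2) := by
    intro x hx
    have : 2*c ≤ x := le_of_lt (lt_of_le_of_lt h hx)
    have h1 : 0 ≤ x/2 - c := by linarith
    exact mul_nonneg h1 (Real.exp_nonneg _)
  have htend := exp_half_tendsto c
  have hint : IntegrableOn (fun x : ℝ => (x/2 - c) * Real.exp (-x / 2)) (Set.Ioi a) :=
    integrableOn_Ioi_deriv_of_nonneg' hderiv hpos htend
  have hval : ∫ x in Set.Ioi a, (x/2 - c) * Real.exp (-x / 2)
      = 0 - (-((a + 2 - 2*c) * Real.exp (-a / 2))) :=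
    integral_Ioi_of_hasDerivAt_of_nonneg' hderiv hpos htend
  rw [← MeasureTheory.ofReal_integral_eq_lintegral_ofReal hint ?_]
  · rw [hval]; ring_nf
  · filter_upwards [MeasureTheory.ae_restrict_mem measurableSet_Ioi] with x hx
    exact hpos x hx

lemma lint_H1 (b : ℝ) :
    ∫⁻ t in Set.Ioi b, ENNReal.ofReal (Real.exp (-t / 2) / 2)
      = ENNReal.ofReal (Real.exp (-b / 2)) := by
  have hderiv : ∀ x ∈ Set.Ici b, HasDerivAt (fun t : ℝ => -Real.exp (-t / 2))
      (Real.exp (-x / 2) / 2) x := by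
    intro x _
    have h1 : HasDerivAt (fun t : ℝ => Real.exp (-t / 2)) (Real.exp (-x/2) * (-1/2)) x := by
      have := (hasDerivAt_id x).neg.div_const 2
      exact (Real.hasDerivAt_exp (-x/2)).comp x (by simpa using this)
    have := h1.neg
    exact this.congr_deriv (by ring)
  have hpos : ∀ x ∈ Set.Ioi b, 0 ≤ Real.exp (-x / 2) / 2 := by
    intro x _; positivity
  have htend : Tendsto (fun t : ℝ => -Real.exp (-t / 2)) atTop (nhds 0) := by
    rw [show (0:ℝ) = -0 by ring]
    apply Tendsto.neg
    have h2 : Tendsto (fun s : ℝ => -s / 2) atTop atBot := by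
      apply Tendsto.atBot_div_const (by norm_num)
      exact tendsto_neg_atTop_atBot
    exact Real.tendsto_exp_atBot.comp h2
  have hint : IntegrableOn (fun x : ℝ => Real.exp (-x / 2) / 2) (Set.Ioi b) :=
    integrableOn_Ioi_deriv_of_nonneg' hderiv hpos htend
  have hval : ∫ x in Set.Ioi b, Real.exp (-x / 2) / 2 = 0 - (-Real.exp (-b / 2)) :=
    integral_Ioi_of_hasDerivAt_of_nonneg' hderiv hpos htend
  rw [← MeasureTheory.ofReal_integral_eq_lintegral_ofReal hint ?_]
  · rw [hval]; ring_nf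
  · filter_upwards [MeasureTheory.ae_restrict_mem measurableSet_Ioi] with x hx
    exact hpos x hx

lemma support_line {s₀ : ℝ} {q : ℝ → ℝ} (hconv : ConvexOn ℝ (Set.Ici s₀) q)
    {s : ℝ} (hs : s₀ < s) : ∃ y : ℝ, ∀ u ∈ Set.Ici s₀, q s + y * (u - s) ≤ q u := by
  set T : Set ℝ := (fun u => (q s - q u) / (s - u)) '' Set.Ico s₀ s with hT
  have hne : T.Nonempty := ⟨_, ⟨s₀, ⟨le_refl _, hs⟩, rfl⟩⟩
  have hub : ∀ x ∈ T, x ≤ (q (s+1) - q s) / (s + 1 - s) := by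
    rintro x ⟨u, ⟨hu1, hu2⟩, rfl⟩
    have := hconv.slope_mono_adjacent (x := u) (y := s) (z := s+1) hu1
      (by simp only [mem_Ici]; linarith) hu2 (by linarith)
    exact this
  have hbdd : BddAbove T := ⟨_, hub⟩
  refine ⟨sSup T, fun u hu => ?_⟩
  rcases lt_trichotomy u s with h | h | h
  · have hmem : (q s - q u) / (s - u) ∈ T := ⟨u, ⟨hu, h⟩, rfl⟩
    have := le_csSup hbdd hmem
    have hsu : 0 < s - u := by linarith
    rw [div_le_iff₀ hsu] at this
    nlinarith
  · subst h; simp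
  · have hle : sSup T ≤ (q u - q s) / (u - s) := by
      apply csSup_le hne
      rintro x ⟨v, ⟨hv1, hv2⟩, rfl⟩
      have := hconv.slope_mono_adjacent (x := v) (y := s) (z := u) hv1 hu hv2 h
      exact this
    have hus : 0 < u - s := by linarith
    rw [le_div_iff₀ hus] at hle
    nlinarith

noncomputable def Bf (s₀ : ℝ) (q : ℝ → ℝ) (k : ℕ) : ℝ :=
  sSup ((fun s => ((k : ℝ) + 1) / 2 * s - q s) '' Set.Ici s₀)

noncomputable def cf (s₀ : ℝ) (q : ℝ → ℝ) (k : ℕ) : ℝ := Bf s₀ q k / ((k : ℝ) + 1)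

lemma Bf_young {s₀ : ℝ} {q : ℝ → ℝ}
    (hfin : ∀ k : ℕ, BddAbove ((fun s => ((k : ℝ) + 1) / 2 * s - q s) '' Set.Ici s₀))
    (k : ℕ) {s : ℝ} (hs : s₀ ≤ s) : ((k : ℝ) + 1) / 2 * s - q s ≤ Bf s₀ q k :=
  le_csSup (hfin k) ⟨s, hs, rfl⟩

lemma cf_young {s₀ : ℝ} {q : ℝ → ℝ}
    (hfin : ∀ k : ℕ, BddAbove ((fun s => ((k : ℝ) + 1) / 2 * s - q s) '' Set.Ici s₀))
    (k : ℕ) {s : ℝ} (hs : s₀ ≤ s) : s / 2 - q s / ((k : ℝ) + 1) ≤ cf s₀ q k := by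
  have h := Bf_young hfin k hs
  have hk : (0:ℝ) < (k : ℝ) + 1 := by positivity
  rw [cf, le_div_iff₀ hk]
  calc (s / 2 - q s / ((k : ℝ) + 1)) * ((k : ℝ) + 1)
      = ((k : ℝ) + 1) / 2 * s - q s := by field_simp
  _ ≤ _ := h

lemma cf_mono {s₀ : ℝ} {q : ℝ → ℝ} (hq0 : ∀ s ≥ s₀, 0 ≤ q s)
    (hfin : ∀ k : ℕ, BddAbove ((fun s => ((k : ℝ) + 1) / 2 * s - q s) '' Set.Ici s₀)) :
    Monotone (cf s₀ q) := by
  apply monotone_nat_of_le_succ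
  intro k
  have hk1 : (0:ℝ) < (k : ℝ) + 1 := by positivity
  have hk2 : (0:ℝ) < (k : ℝ) + 2 := by positivity
  have key : ((k : ℝ) + 2) * Bf s₀ q k ≤ ((k : ℝ) + 1) * Bf s₀ q (k+1) := by
    have h1 : Bf s₀ q k ≤ (((k : ℝ) + 1) * Bf s₀ q (k+1)) / ((k : ℝ) + 2) := by
      rw [Bf]
      apply csSup_le (Set.Nonempty.image _ Set.nonempty_Ici)
      rintro x ⟨s, hs, rfl⟩
      rw [le_div_iff₀ hk2]
      have h2 : ((k+1 : ℕ) + 1 : ℝ) / 2 * s - q s ≤ Bf s₀ q (k+1) := Bf_young hfin (k+1) hs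
      have h3 : (((k : ℝ) + 1) / 2 * s - q s) * ((k : ℝ) + 2)
          ≤ ((k : ℝ) + 1) * (((k+1 : ℕ) + 1 : ℝ) / 2 * s - q s) := by
        have := hq0 s hs
        push_cast
        nlinarith
      calc (((k : ℝ) + 1) / 2 * s - q s) * ((k : ℝ) + 2) ≤ _ := h3
      _ ≤ ((k : ℝ) + 1) * Bf s₀ q (k+1) := by nlinarith
    rw [le_div_iff₀ hk2] at h1
    linarith
  rw [cf, cf, div_le_div_iff₀ hk1 (by push_cast; linarith)]
  push_cast
  nlinarith

lemma P1 {s₀ : ℝ} {q : ℝ → ℝ} (hconv : ConvexOn ℝ (Set.Ici s₀) q)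
    (hq0 : ∀ s ≥ s₀, 0 ≤ q s)
    (hfin : ∀ k : ℕ, BddAbove ((fun s => ((k : ℝ) + 1) / 2 * s - q s) '' Set.Ici s₀))
    {s : ℝ} (hs : s₀ ≤ s) :
    ENNReal.ofReal (q s) ≤ ENNReal.ofReal (q s₀ + (s - s₀)/2)
      + ∑' k, ENNReal.ofReal (s/2 - cf s₀ q k) := by
  have hfirst : ∀ x : ℝ, q s ≤ q s₀ + (s - s₀)/2 + x → x ≤ 0 →
      ENNReal.ofReal (q s) ≤ ENNReal.ofReal (q s₀ + (s - s₀)/2)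
        + ∑' k, ENNReal.ofReal (s/2 - cf s₀ q k) := by
    intro x h1 h2
    exact le_trans (ENNReal.ofReal_le_ofReal (by linarith)) le_self_add
  rcases eq_or_lt_of_le hs with rfl | hlt
  · exact hfirst 0 (by linarith) le_rfl
  obtain ⟨y, hy⟩ := support_line hconv hlt
  by_cases hy2 : y ≤ 1/2
  · have h0 := hy s₀ Set.self_mem_Ici
    exact hfirst 0 (by nlinarith) le_rfl
  push_neg at hy2
  set k : ℕ := ⌊2*y - 1⌋₊ with hk
  have hk1 : ((k:ℝ)+1) ≤ 2*y := by
    have := Nat.floor_le (by linarith : (0:ℝ) ≤ 2*y - 1)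
    rw [← hk] at this; linarith
  have hk2 : 2*y ≤ ((k:ℝ)+2) := by
    have := Nat.lt_floor_add_one (2*y - 1)
    rw [← hk] at this; linarith
  have key : Bf s₀ q k ≤ y*s - q s - (y - ((k:ℝ)+1)/2)*s₀ := by
    rw [Bf]
    apply csSup_le (Set.Nonempty.image _ Set.nonempty_Ici)
    rintro x ⟨u, hu, rfl⟩
    have hsupp := hy u hu
    have hu0 : s₀ ≤ u := hu
    have hyk : 0 ≤ y - ((k:ℝ)+1)/2 := by linarith
    nlinarith [mul_nonneg hyk (by linarith : (0:ℝ) ≤ u - s₀)]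
  have hcfB : ((k:ℝ)+1) * cf s₀ q k = Bf s₀ q k := by
    rw [cf]; field_simp
  have hq1 : q s ≤ ((k:ℝ)+1)*(s/2 - cf s₀ q k) + (s - s₀)/2 := by
    have hyk : 0 ≤ y - ((k:ℝ)+1)/2 := by linarith
    have hyk2 : y - ((k:ℝ)+1)/2 ≤ 1/2 := by linarith
    nlinarith [mul_nonneg (by linarith : (0:ℝ) ≤ 1/2 - (y - ((k:ℝ)+1)/2))
      (by linarith : (0:ℝ) ≤ s - s₀)]
  have hsplit : ENNReal.ofReal (q s) ≤ ENNReal.ofReal ((s - s₀)/2)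
      + ENNReal.ofReal (((k:ℝ)+1)*(s/2 - cf s₀ q k)) := by
    refine le_trans (ENNReal.ofReal_le_ofReal hq1) ?_
    rw [add_comm (((k:ℝ)+1)*(s/2 - cf s₀ q k)) ((s - s₀)/2)]
    exact ENNReal.ofReal_add_le
  refine le_trans hsplit (add_le_add ?_ ?_)
  · exact ENNReal.ofReal_le_ofReal (by linarith [hq0 s₀ (le_refl s₀)])
  · by_cases hx : s/2 - cf s₀ q k ≤ 0
    · rw [ENNReal.ofReal_eq_zero.mpr (by nlinarith : ((k:ℝ)+1)*(s/2 - cf s₀ q k) ≤ 0)]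
      exact zero_le
    push_neg at hx
    have : ENNReal.ofReal (((k:ℝ)+1)*(s/2 - cf s₀ q k))
        = ∑ _j ∈ Finset.range (k+1), ENNReal.ofReal (s/2 - cf s₀ q k) := by
      rw [ENNReal.ofReal_mul (by positivity : (0:ℝ) ≤ (k:ℝ)+1)]
      rw [Finset.sum_const, Finset.card_range, nsmul_eq_mul]
      congr 1
      rw [show ((k:ℝ)+1) = ((k+1 : ℕ) : ℝ) by push_cast; ring, ENNReal.ofReal_natCast]
    rw [this]
    refine le_trans (Finset.sum_le_sum (fun j hj => ?_)) (ENNReal.sum_le_tsum _)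
    have : cf s₀ q j ≤ cf s₀ q k :=
      cf_mono hq0 hfin (by simpa using Nat.lt_succ_iff.mp (Finset.mem_range.mp hj))
    exact ENNReal.ofReal_le_ofReal (by linarith)

lemma measA (c : ℝ) : Measurable (fun s : ℝ => ENNReal.ofReal ((s/2 - c) * Real.exp (-s/2))) :=
  Measurable.ennreal_ofReal (Continuous.measurable (by fun_prop))

lemma dirA {s₀ : ℝ} {q : ℝ → ℝ} (hconv : ConvexOn ℝ (Set.Ici s₀) q)
    (hq0 : ∀ s ≥ s₀, 0 ≤ q s)
    (hfin : ∀ k : ℕ, BddAbove ((fun s => ((k : ℝ) + 1) / 2 * s - q s) '' Set.Ici s₀))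
    (hsum : Summable (fun k : ℕ => Real.exp (-(cf s₀ q k)))) :
    ∫⁻ s in Set.Ici s₀, ENNReal.ofReal (q s * Real.exp (-s / 2)) ≠ ⊤ := by
  set c : ℕ → ℝ := cf s₀ q with hc
  have step1 : ∀ s ∈ Set.Ici s₀, ENNReal.ofReal (q s * Real.exp (-s/2))
      ≤ ENNReal.ofReal ((q s₀ + (s - s₀)/2) * Real.exp (-s/2))
        + ∑' k, ENNReal.ofReal ((s/2 - c k) * Real.exp (-s/2)) := by
    intro s hs
    have hP := P1 hconv hq0 hfin hs
    have hmul := mul_le_mul_left hP (ENNReal.ofReal (Real.exp (-s/2)))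
    rw [← ENNReal.ofReal_mul (hq0 s hs)] at hmul
    refine le_trans hmul ?_
    rw [add_mul, ← ENNReal.tsum_mul_right]
    apply add_le_add
    · rw [← ENNReal.ofReal_mul' (Real.exp_nonneg _)]
    · exact ENNReal.tsum_le_tsum (fun k => by
        rw [← ENNReal.ofReal_mul' (Real.exp_nonneg _)])
  have hrhs_meas : Measurable (fun s : ℝ => ENNReal.ofReal ((q s₀ + (s - s₀)/2) * Real.exp (-s/2))) := by
    apply Measurable.ennreal_ofReal
    exact Continuous.measurable (by fun_prop)
  have step2 := MeasureTheory.setLIntegral_mono (μ := volume) (s := Set.Ici s₀)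
    (by exact hrhs_meas.add (Measurable.ennreal_tsum (fun k => measA (c k)))) step1
  rw [MeasureTheory.lintegral_add_left hrhs_meas, MeasureTheory.lintegral_tsum
    (fun k => (measA (c k)).aemeasurable)] at step2
  have hIci : ∀ f : ℝ → ℝ≥0∞, ∫⁻ s in Set.Ici s₀, f s = ∫⁻ s in Set.Ioi s₀, f s :=
    fun f => (MeasureTheory.setLIntegral_congr (MeasureTheory.Ioi_ae_eq_Ici (a := s₀))).symm
  have termA : ∫⁻ s in Set.Ici s₀, ENNReal.ofReal ((q s₀ + (s - s₀)/2) * Real.exp (-s/2))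
      = ENNReal.ofReal ((s₀ + 2 - 2*(s₀/2 - q s₀)) * Real.exp (-s₀ / 2)) := by
    rw [hIci]
    rw [← lint_H2 s₀ (s₀/2 - q s₀) (by linarith [hq0 s₀ (le_refl s₀)])]
    apply MeasureTheory.setLIntegral_congr_fun measurableSet_Ioi
    intro s _
    congr 1
    ring
  have termK : ∀ k : ℕ, ∫⁻ s in Set.Ici s₀, ENNReal.ofReal ((s/2 - c k) * Real.exp (-s/2))
      ≤ ENNReal.ofReal (2 * Real.exp (-(c k))) := by
    intro k
    have hsplit : (∫⁻ s : ℝ, ENNReal.ofReal ((s/2 - c k) * Real.exp (-s/2)))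
        = (∫⁻ s in Set.Iic (2 * c k), ENNReal.ofReal ((s/2 - c k) * Real.exp (-s/2)))
          + ∫⁻ s in (Set.Iic (2 * c k))ᶜ, ENNReal.ofReal ((s/2 - c k) * Real.exp (-s/2)) := by
      exact (MeasureTheory.lintegral_add_compl _ measurableSet_Iic).symm
    refine le_trans (MeasureTheory.setLIntegral_le_lintegral _ _) ?_
    rw [hsplit, Set.compl_Iic]
    have h0 : ∫⁻ s in Set.Iic (2 * c k), ENNReal.ofReal ((s/2 - c k) * Real.exp (-s/2)) = 0 := by
      rw [show (0 : ℝ≥0∞) = ∫⁻ _ in Set.Iic (2 * c k), 0 from (MeasureTheory.lintegral_zero).symm]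
      apply MeasureTheory.setLIntegral_congr_fun measurableSet_Iic
      intro s hs
      rw [ENNReal.ofReal_eq_zero]
      have : s/2 - c k ≤ 0 := by
        simp only [Set.mem_Iic] at hs; linarith
      exact mul_nonpos_of_nonpos_of_nonneg this (Real.exp_nonneg _)
    rw [h0, zero_add, lint_H2 (2 * c k) (c k) (by linarith)]
    apply le_of_eq
    congr 1
    rw [show -(2 * c k) / 2 = -(c k) by ring]
    ring
  have hfin2 : ∑' k, ENNReal.ofReal (2 * Real.exp (-(c k))) ≠ ⊤ := by
    rw [← ENNReal.ofReal_tsum_of_nonneg (fun k => by positivity) (hsum.mul_left 2)]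
    exact ENNReal.ofReal_ne_top
  have final : ∫⁻ s in Set.Ici s₀, ENNReal.ofReal (q s * Real.exp (-s/2))
      < ⊤ := by
    refine lt_of_le_of_lt step2 (ENNReal.add_lt_top.mpr ⟨?_, ?_⟩)
    · rw [termA]; exact ENNReal.ofReal_lt_top
    · exact lt_of_le_of_lt (ENNReal.tsum_le_tsum termK) (lt_of_le_of_lt le_rfl hfin2.lt_top)
  exact final.ne

lemma dirB {s₀ : ℝ} {q : ℝ → ℝ} (hq0 : ∀ s ≥ s₀, 0 ≤ q s)
    (hfin : ∀ k : ℕ, BddAbove ((fun s => ((k : ℝ) + 1) / 2 * s - q s) '' Set.Ici s₀))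
    (hI : (∫⁻ s in Set.Ici s₀, ENNReal.ofReal (q s * Real.exp (-s / 2))) ≠ ⊤) :
    Summable (fun k : ℕ => Real.exp (-(cf s₀ q k))) := by
  set c : ℕ → ℝ := cf s₀ q with hc
  set g : ℝ → ℝ≥0∞ := fun t => ENNReal.ofReal (Real.exp (-t/2) / 2) with hg
  have hgm : Measurable g :=
    Measurable.ennreal_ofReal (Continuous.measurable (by fun_prop))
  have key0 : ∀ k : ℕ, ENNReal.ofReal (Real.exp (-(c k)))
      = ∫⁻ t, (Set.Ioi (2 * c k)).indicator g t := by
    intro k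
    rw [MeasureTheory.lintegral_indicator measurableSet_Ioi, hg]
    rw [lint_H1 (2 * c k), show -(2 * c k)/2 = -(c k) by ring]
  -- pointwise bound
  set A : ℝ → ℝ≥0∞ := (Set.Ioi (2 * c 0)).indicator
    (fun t => (ENNReal.ofReal (q s₀) + 1) * g t) with hA
  set B : ℝ → ℝ≥0∞ := (Set.Ici (s₀ - 2)).indicator
    (fun t => ENNReal.ofReal (q (t + 2)) * g t) with hB
  have hpt : ∀ t : ℝ, (∑' k, (Set.Ioi (2 * c k)).indicator g t) ≤ A t + B t := by
    intro t
    by_cases ht0 : 2 * c 0 < t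
    · set R : ℝ := q (max (t + 2) s₀) with hR
      have hR0 : 0 ≤ R := hq0 _ (le_max_right _ _)
      have claim1 : ∀ k : ℕ, (Set.Ioi (2 * c k)).indicator g t
          ≤ (if ((k:ℝ) + 1) < R then g t else 0) := by
        intro k
        by_cases hmem : t ∈ Set.Ioi (2 * c k)
        · rw [Set.indicator_of_mem hmem]
          have hyoung := cf_young hfin k (le_max_right (t + 2) s₀)
          have hmax : t + 2 ≤ max (t + 2) s₀ := le_max_left _ _
          have hkpos : (0:ℝ) < (k:ℝ) + 1 := by positivity
          have htk : 2 * c k < t := hmem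
          have h1 : 1 < R / ((k:ℝ) + 1) := by
            rw [← hc] at hyoung
            nlinarith [div_nonneg hR0 hkpos.le]
          rw [lt_div_iff₀ hkpos] at h1
          rw [if_pos (by linarith)]
        · rw [Set.indicator_of_notMem hmem]; exact zero_le
      have claim2 : (∑' k : ℕ, (if ((k:ℝ) + 1) < R then g t else 0))
          ≤ (⌈R⌉₊ : ℝ≥0∞) * g t := by
        have hsupp : ∀ k ∉ Finset.range ⌈R⌉₊, (if ((k:ℝ) + 1) < R then g t else 0) = 0 := by
          intro k hk
          rw [if_neg]
          push_neg
          have h2 : (⌈R⌉₊ : ℝ) ≤ (k : ℝ) := by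
            exact_mod_cast Nat.le_of_not_lt (fun h => hk (Finset.mem_range.mpr h))
          have h3 : R ≤ (⌈R⌉₊ : ℝ) := Nat.le_ceil R
          linarith
        rw [tsum_eq_sum hsupp]
        calc (∑ j ∈ Finset.range ⌈R⌉₊, if ((j:ℝ) + 1) < R then g t else 0)
            ≤ ∑ _j ∈ Finset.range ⌈R⌉₊, g t :=
              Finset.sum_le_sum (fun j _ => by split <;> simp)
        _ = (⌈R⌉₊ : ℝ≥0∞) * g t := by
              rw [Finset.sum_const, Finset.card_range, nsmul_eq_mul]
      have hceil : (⌈R⌉₊ : ℝ≥0∞) ≤ ENNReal.ofReal R + 1 := by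
        rw [← ENNReal.ofReal_natCast, ← ENNReal.ofReal_one, ← ENNReal.ofReal_add hR0 zero_le_one]
        exact ENNReal.ofReal_le_ofReal (le_of_lt (Nat.ceil_lt_add_one hR0))
      refine le_trans (ENNReal.tsum_le_tsum claim1) (le_trans claim2 ?_)
      by_cases hts : s₀ ≤ t + 2
      · have hmax : max (t + 2) s₀ = t + 2 := max_eq_left hts
        have hAt : A t = (ENNReal.ofReal (q s₀) + 1) * g t :=
          Set.indicator_of_mem ht0 _
        have hBt : B t = ENNReal.ofReal (q (t + 2)) * g t :=
          Set.indicator_of_mem (by simp only [Set.mem_Ici]; linarith) _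
        rw [hAt, hBt]
        calc (⌈R⌉₊ : ℝ≥0∞) * g t ≤ (ENNReal.ofReal R + 1) * g t :=
              mul_le_mul_left hceil _
        _ = ENNReal.ofReal R * g t + g t := by rw [add_mul, one_mul]
        _ ≤ (ENNReal.ofReal (q s₀) + 1) * g t + ENNReal.ofReal (q (t+2)) * g t := by
              rw [hR, hmax, add_comm (ENNReal.ofReal (q (t+2)) * g t) (g t)]
              refine add_le_add ?_ le_rfl
              rw [add_mul, one_mul]
              exact le_add_self
      · have hmax : max (t + 2) s₀ = s₀ := max_eq_right (by linarith)
        have hAt : A t = (ENNReal.ofReal (q s₀) + 1) * g t :=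
          Set.indicator_of_mem ht0 _
        rw [hAt]
        refine le_trans (le_trans (mul_le_mul_left hceil _) ?_) le_self_add
        rw [hR, hmax]
    · have hzero : ∀ k : ℕ, (Set.Ioi (2 * c k)).indicator g t = 0 := by
        intro k
        apply Set.indicator_of_notMem
        have : c 0 ≤ c k := cf_mono hq0 hfin (Nat.zero_le k)
        simp only [Set.mem_Ioi, not_lt]
        linarith
      simp only [hzero, tsum_zero]
      exact zero_le
  -- integrate the bound
  have hS : (∑' k, ENNReal.ofReal (Real.exp (-(c k)))) ≤ (∫⁻ t, A t) + ∫⁻ t, B t := by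
    calc (∑' k, ENNReal.ofReal (Real.exp (-(c k))))
        = ∑' k, ∫⁻ t, (Set.Ioi (2 * c k)).indicator g t := by
          exact tsum_congr key0
    _ = ∫⁻ t, ∑' k, (Set.Ioi (2 * c k)).indicator g t := by
          rw [← MeasureTheory.lintegral_tsum (fun k =>
            ((hgm.indicator measurableSet_Ioi).aemeasurable))]
    _ ≤ ∫⁻ t, (A t + B t) := MeasureTheory.lintegral_mono hpt
    _ = _ := MeasureTheory.lintegral_add_left
        ((hgm.const_mul _).indicator measurableSet_Ioi) _
  have hAfin : (∫⁻ t, A t) ≠ ⊤ := by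
    rw [hA, MeasureTheory.lintegral_indicator measurableSet_Ioi,
      MeasureTheory.lintegral_const_mul' _ _ (by simp : ENNReal.ofReal (q s₀) + 1 ≠ ⊤),
      hg, lint_H1]
    exact ENNReal.mul_ne_top (by simp) ENNReal.ofReal_ne_top
  have hBfin : (∫⁻ t, B t) ≠ ⊤ := by
    set F : ℝ → ℝ≥0∞ := fun u => (Set.Ici s₀).indicator
      (fun u => ENNReal.ofReal (q u) * g (u - 2)) u with hF
    have hFB : ∀ t : ℝ, B t = F (t + 2) := by
      intro t
      rw [hB]
      simp only [hF]
      by_cases ht : t ∈ Set.Ici (s₀ - 2)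
      · rw [Set.indicator_of_mem ht, Set.indicator_of_mem
          (by simp only [Set.mem_Ici] at ht ⊢; linarith)]
        norm_num
      · rw [Set.indicator_of_notMem ht, Set.indicator_of_notMem
          (by simp only [Set.mem_Ici] at ht ⊢; intro h; exact ht (by linarith))]
    have htrans : (∫⁻ t, B t) = ∫⁻ u, F u := by
      calc (∫⁻ t, B t) = ∫⁻ t, F (t + 2) := by
            exact MeasureTheory.lintegral_congr hFB
      _ = ∫⁻ u, F u := MeasureTheory.lintegral_add_right_eq_self F 2
    rw [htrans, hF, MeasureTheory.lintegral_indicator measurableSet_Ici]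
    have hcong : ∫⁻ u in Set.Ici s₀, ENNReal.ofReal (q u) * g (u - 2)
        = ∫⁻ u in Set.Ici s₀, ENNReal.ofReal (Real.exp 1 / 2)
            * ENNReal.ofReal (q u * Real.exp (-u / 2)) := by
      apply MeasureTheory.setLIntegral_congr_fun measurableSet_Ici
      intro u hu
      simp only [hg]
      have he : Real.exp (-(u - 2)/2) / 2 = (Real.exp 1 / 2) * Real.exp (-u/2) := by
        rw [show -(u - 2)/2 = 1 + -u/2 by ring, Real.exp_add]
        ring
      rw [he, ENNReal.ofReal_mul (by positivity), ENNReal.ofReal_mul (hq0 u hu)]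
      ring
    rw [hcong, MeasureTheory.lintegral_const_mul' _ _ ENNReal.ofReal_ne_top]
    exact ENNReal.mul_ne_top ENNReal.ofReal_ne_top hI
  have hSfin : (∑' k, ENNReal.ofReal (Real.exp (-(c k)))) ≠ ⊤ :=
    ne_top_of_le_ne_top (ENNReal.add_ne_top.mpr ⟨hAfin, hBfin⟩) hS
  have := ENNReal.summable_toReal hSfin
  refine this.congr (fun k => ?_)
  rw [ENNReal.toReal_ofReal (Real.exp_nonneg _)]

/-- Ostrowski-type equivalence: for a convex nonnegative `q` on `[s₀,∞)` with finite
Legendre transform at the points `k/2`, the logarithmic integral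
`∫_{s₀}^∞ q(s) e^{-s/2} ds` is infinite if and only if `Σ_{k≥1} exp(-q*(k/2)/k) = ∞`. -/
theorem ostrowski_equivalence (s₀ : ℝ) (q : ℝ → ℝ)
    (hconv : ConvexOn ℝ (Set.Ici s₀) q)
    (hq0 : ∀ s ≥ s₀, 0 ≤ q s)
    (hfin : ∀ k : ℕ,
      BddAbove ((fun s => ((k : ℝ) + 1) / 2 * s - q s) '' Set.Ici s₀)) :
    (∫⁻ s in Set.Ici s₀, ENNReal.ofReal (q s * Real.exp (-s / 2)) = ⊤)
      ↔ ¬ Summable (fun k : ℕ =>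
          Real.exp (-(sSup ((fun s => ((k : ℝ) + 1) / 2 * s - q s) '' Set.Ici s₀))
            / ((k : ℝ) + 1))) := by
  have hkey : ∀ k : ℕ,
      Real.exp (-(sSup ((fun s => ((k : ℝ) + 1) / 2 * s - q s) '' Set.Ici s₀)) / ((k : ℝ) + 1))
        = Real.exp (-(cf s₀ q k)) := by
    intro k
    simp only [cf, Bf, neg_div]
  constructor
  · intro htop hsum
    exact dirA hconv hq0 hfin (hsum.congr hkey) htop
  · intro hns
    by_contra hne
    exact hns ((dirB hq0 hfin hne).congr (fun k => (hkey k).symm))
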